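/- Let (Y₀, Y₁, D, X) be as in the unconfoundedness setup: Y = DY₁ + (1-D)Y₀, (Y₀,Y₁) ⫫ D | X, ε ≤ p₁(X) ≤ 1-ε a.s. with p₁(X) = P(D=1|X), and Y₀, Y₁ integrable, with P(D=1) > 0. Then E[Y₁ - Y₀ | D=1] = E[Y | D=1] - E[ p₁(X)·Y / p₀(X) | D=0 ] / E[ p₁(X)/p₀(X) | D=0 ], where p₀(X) = 1 - p₁(X). -/

import Mathlib

open MeasureTheory ProbabilityTheory
open scoped NNReal ENNReal

lemma aux_integral_mul_eq_zero {Ω : Type*} [mΩ : MeasurableSpace Ω] (μ : Measure Ω)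
    [IsFiniteMeasure μ] {w f : Ω → ℝ} (hw : Measurable w) {C : ℝ}
    (hwb : ∀ᵐ x ∂μ, |w x| ≤ C) (hfm : Measurable f) (hfi : Integrable f μ)
    (h : ∀ t : Set ℝ, MeasurableSet t →
      ∫ x, w x * (f ⁻¹' t).indicator (fun _ => (1:ℝ)) x ∂μ = 0) :
    ∫ x, w x * f x ∂μ = 0 := by
  have hwint : Integrable w μ := by
    refine (integrable_const C).mono' hw.aestronglyMeasurable ?_
    filter_upwards [hwb] with x hx
    simpa [Real.norm_eq_abs] using hx
  set wp : Ω → ℝ≥0 := fun x => (w x).toNNReal with hwp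
  set wm : Ω → ℝ≥0 := fun x => (-(w x)).toNNReal with hwm
  have hwpm : Measurable wp := hw.real_toNNReal
  have hwmm : Measurable wm := hw.neg.real_toNNReal
  have hwpc : ∀ x, ((wp x : ℝ)) = max (w x) 0 := fun x => Real.coe_toNNReal' _
  have hwmc : ∀ x, ((wm x : ℝ)) = max (-(w x)) 0 := fun x => Real.coe_toNNReal' _
  have hsub : ∀ x, (wp x : ℝ) - (wm x : ℝ) = w x := by
    intro x; rw [hwpc, hwmc]; rcases le_total (w x) 0 with h' | h' <;>
      [rw [max_eq_right h', max_eq_left (by linarith)];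
       rw [max_eq_left h', max_eq_right (by linarith)]] <;> ring
  have hwpi : Integrable (fun x => (wp x : ℝ)) μ := by
    refine hwint.abs.mono' (hwpm.coe_nnreal_real).aestronglyMeasurable ?_
    filter_upwards with x
    rw [Real.norm_eq_abs, hwpc, abs_of_nonneg (le_max_right _ _)]
    exact max_le (le_abs_self _) (abs_nonneg _)
  have hwmi : Integrable (fun x => (wm x : ℝ)) μ := by
    refine hwint.abs.mono' (hwmm.coe_nnreal_real).aestronglyMeasurable ?_
    filter_upwards with x
    rw [Real.norm_eq_abs, hwmc, abs_of_nonneg (le_max_right _ _)]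
    exact max_le (neg_le_abs _) (abs_nonneg _)
  -- the two withDensity measures
  set μ1 : Measure Ω := μ.withDensity (fun x => (wp x : ℝ≥0∞)) with hμ1
  set μ2 : Measure Ω := μ.withDensity (fun x => (wm x : ℝ≥0∞)) with hμ2
  have hmap : μ1.map f = μ2.map f := by
    ext t ht
    rw [Measure.map_apply hfm ht, Measure.map_apply hfm ht, hμ1, hμ2,
      withDensity_apply _ (hfm ht), withDensity_apply _ (hfm ht),
      lintegral_coe_eq_integral wp (hwpi.restrict), lintegral_coe_eq_integral wm (hwmi.restrict)]
    congr 1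
    have h0 := h t ht
    have : ∫ x, w x * (f ⁻¹' t).indicator (fun _ => (1:ℝ)) x ∂μ
        = ∫ x in f ⁻¹' t, w x ∂μ := by
      rw [← integral_indicator (hfm ht)]
      congr 1 with x
      by_cases hx : x ∈ f ⁻¹' t <;> simp [Set.indicator_apply, hx]
    rw [this] at h0
    have hsplit : ∫ x in f ⁻¹' t, w x ∂μ
        = (∫ x in f ⁻¹' t, (wp x : ℝ) ∂μ) - ∫ x in f ⁻¹' t, (wm x : ℝ) ∂μ := by
      rw [← integral_sub hwpi.restrict hwmi.restrict]
      exact integral_congr_ae (Filter.Eventually.of_forall fun x => (hsub x).symm)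
    rw [hsplit] at h0
    linarith
  have hint1 : ∫ x, (wp x : ℝ) * f x ∂μ = ∫ y, id y ∂(μ1.map f) := by
    rw [integral_map hfm.aemeasurable aestronglyMeasurable_id, hμ1,
      integral_withDensity_eq_integral_smul hwpm]
    simp [NNReal.smul_def]
  have hint2 : ∫ x, (wm x : ℝ) * f x ∂μ = ∫ y, id y ∂(μ2.map f) := by
    rw [integral_map hfm.aemeasurable aestronglyMeasurable_id, hμ2,
      integral_withDensity_eq_integral_smul hwmm]
    simp [NNReal.smul_def]
  have hfi1 : Integrable (fun x => (wp x : ℝ) * f x) μ := by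
    refine hfi.bdd_mul (c := max C 0) (hwpm.coe_nnreal_real).aestronglyMeasurable ?_
    filter_upwards [hwb] with x hx
    rw [Real.norm_eq_abs, hwpc, abs_of_nonneg (le_max_right _ _)]
    exact max_le_max (le_of_abs_le hx) le_rfl
  have hfi2 : Integrable (fun x => (wm x : ℝ) * f x) μ := by
    refine hfi.bdd_mul (c := max C 0) (hwmm.coe_nnreal_real).aestronglyMeasurable ?_
    filter_upwards [hwb] with x hx
    rw [Real.norm_eq_abs, hwmc, abs_of_nonneg (le_max_right _ _)]
    rw [abs_le] at hx
    exact max_le_max (by linarith) le_rfl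
  calc ∫ x, w x * f x ∂μ
      = ∫ x, ((wp x : ℝ) * f x - (wm x : ℝ) * f x) ∂μ := by
        refine integral_congr_ae (Filter.Eventually.of_forall fun x => ?_)
        show w x * f x = (wp x : ℝ) * f x - (wm x : ℝ) * f x
        rw [← sub_mul, hsub x]
    _ = ∫ x, (wp x : ℝ) * f x ∂μ - ∫ x, (wm x : ℝ) * f x ∂μ := integral_sub hfi1 hfi2
    _ = 0 := by rw [hint1, hint2, hmap, sub_self]

lemma aux_pull {Ω : Type*} {m mΩ : MeasurableSpace Ω} (hm : m ≤ mΩ)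
    (μ : Measure Ω) [IsFiniteMeasure μ] {r h : Ω → ℝ}
    (hr : StronglyMeasurable[m] r) {C : ℝ} (hrb : ∀ᵐ x ∂μ, |r x| ≤ C)
    (hh : Integrable h μ) :
    ∫ x, r x * h x ∂μ = ∫ x, r x * (μ[h|m]) x ∂μ := by
  have h2 : μ[r * h|m] =ᵐ[μ] r * μ[h|m] :=
    condExp_stronglyMeasurable_mul_of_bound (mΩ := mΩ) (μ := μ) (g := h) hm hr hh C
      (hrb.mono fun x hx => by simpa [Real.norm_eq_abs] using hx)
  calc ∫ x, r x * h x ∂μ = ∫ x, (r * h) x ∂μ := rfl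
    _ = ∫ x, (μ[r * h|m]) x ∂μ := (integral_condExp (m₀ := mΩ) (μ := μ) hm).symm
    _ = ∫ x, (r * μ[h|m]) x ∂μ := integral_congr_ae h2
    _ = ∫ x, r x * (μ[h|m]) x ∂μ := rfl

lemma main_aux {Ω : Type*} {m mΩ : MeasurableSpace Ω} (hm : m ≤ mΩ)
    (μ : Measure Ω) [IsProbabilityMeasure μ]
    (Y0 Y1 D : Ω → ℝ)
    (hY0 : Measurable Y0) (hY1 : Measurable Y1) (hD : Measurable D)
    (hD01 : ∀ ω, D ω = 0 ∨ D ω = 1)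
    (hY0int : Integrable Y0 μ) (hY1int : Integrable Y1 μ)
    (p1X : Ω → ℝ) (hp1X : p1X = μ[D|m])
    (hprod : ∀ s t : Set ℝ, MeasurableSet s → MeasurableSet t →
      (μ⟦Y0 ⁻¹' s ∩ D ⁻¹' t | m⟧) =ᵐ[μ]
        fun ω => (μ⟦Y0 ⁻¹' s | m⟧) ω * (μ⟦D ⁻¹' t | m⟧) ω)
    (ε : ℝ) (hε : 0 < ε) (hoverlap : ∀ᵐ ω ∂μ, ε ≤ p1X ω ∧ p1X ω ≤ 1 - ε)
    (hDpos : 0 < μ {ω | D ω = 1})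
    (Y : Ω → ℝ) (hY : ∀ ω, Y ω = D ω * Y1 ω + (1 - D ω) * Y0 ω) :
    ∫ ω, (Y1 ω - Y0 ω) ∂μ[|{ω | D ω = 1}] =
      (∫ ω, Y ω ∂μ[|{ω | D ω = 1}]) -
        (∫ ω, p1X ω * Y ω / (1 - p1X ω) ∂μ[|{ω | D ω = 0}]) /
          (∫ ω, p1X ω / (1 - p1X ω) ∂μ[|{ω | D ω = 0}]) := by
  have hne : (MeasureTheory.ae μ).NeBot := ae_neBot.mpr (IsProbabilityMeasure.ne_zero μ)
  set A : Set Ω := {ω | D ω = 1} with hAdef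
  have hA : MeasurableSet A := hD (measurableSet_singleton 1)
  have hAc : {ω | D ω = 0} = Aᶜ := by
    ext ω; rcases hD01 ω with h | h <;> simp [hAdef, h]
  have hDind : D = A.indicator (fun _ => (1:ℝ)) := by
    funext ω; rcases hD01 ω with h | h <;> simp [Set.indicator_apply, hAdef, h]
  have hp1m : StronglyMeasurable[m] p1X := hp1X ▸ stronglyMeasurable_condExp
  have hp1meas : Measurable p1X := (hp1m.mono hm).measurable
  have hp1A : p1X = μ[A.indicator (fun _ => (1:ℝ)) | m] := by rw [hp1X, hDind]
  have hbd1 : ∀ᵐ ω ∂μ, |p1X ω| ≤ 1 := by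
    filter_upwards [hoverlap] with ω h
    rw [abs_le]; constructor <;> nlinarith [h.1, h.2, hε.le]
  -- the reweighting function r2
  set r2 : Ω → ℝ := fun ω => p1X ω / (1 - p1X ω) with hr2def
  have hr2mm : Measurable[m] r2 :=
    hp1m.measurable.div (measurable_const.sub hp1m.measurable)
  have hr2m : StronglyMeasurable[m] r2 := hr2mm.stronglyMeasurable
  set C2 : ℝ := (1 - ε) / ε with hC2
  have hr2b : ∀ᵐ ω ∂μ, |r2 ω| ≤ C2 := by
    filter_upwards [hoverlap] with ω h
    have h1 : ε ≤ 1 - p1X ω := by linarith [h.2]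
    have h2 : 0 < 1 - p1X ω := lt_of_lt_of_le hε h1
    rw [hr2def, abs_of_nonneg (div_nonneg (le_trans hε.le h.1) h2.le)]
    exact div_le_div₀ (by linarith [h.1.trans h.2]) h.2 hε h1
  -- the key conditional-independence computation
  have key : ∀ (r : Ω → ℝ) (Cr : ℝ), StronglyMeasurable[m] r → (∀ᵐ x ∂μ, |r x| ≤ Cr) →
      ∫ x, r x * (A.indicator (fun _ => (1:ℝ)) x * Y0 x) ∂μ
        = ∫ x, r x * (p1X x * (μ[Y0|m]) x) ∂μ := by
    intro r Cr hr hrb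
    have hrmeas : Measurable r := (hr.mono hm).measurable
    have hCr : 0 ≤ Cr := by
      obtain ⟨x, hx⟩ := hrb.exists
      exact le_trans (abs_nonneg _) hx
    have hrp : StronglyMeasurable[m] (fun x => r x * p1X x) := hr.mul hp1m
    have hrpb : ∀ᵐ x ∂μ, |r x * p1X x| ≤ Cr := by
      filter_upwards [hrb, hbd1] with x h1 h2
      calc |r x * p1X x| = |r x| * |p1X x| := abs_mul _ _
        _ ≤ Cr * 1 := mul_le_mul h1 h2 (abs_nonneg _) hCr
        _ = Cr := mul_one _
    have hz : ∫ x, (r x * (A.indicator (fun _ => (1:ℝ)) x - p1X x)) * Y0 x ∂μ = 0 := by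
      refine aux_integral_mul_eq_zero μ
        (hrmeas.mul ((measurable_const.indicator hA).sub hp1meas)) (C := 2 * Cr)
        ?_ hY0 hY0int ?_
      · filter_upwards [hrb, hbd1] with x h1 h2
        have hia : |A.indicator (fun _ => (1:ℝ)) x| ≤ 1 := by
          by_cases hx : x ∈ A <;> simp [Set.indicator_apply, hx]
        calc |r x * (A.indicator (fun _ => (1:ℝ)) x - p1X x)|
            = |r x| * |A.indicator (fun _ => (1:ℝ)) x - p1X x| := abs_mul _ _
          _ ≤ Cr * 2 := by
              refine mul_le_mul h1 ?_ (abs_nonneg _) hCr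
              calc |A.indicator (fun _ => (1:ℝ)) x - p1X x|
                  ≤ |A.indicator (fun _ => (1:ℝ)) x| + |p1X x| := abs_sub _ _
                _ ≤ 1 + 1 := add_le_add hia h2
                _ = 2 := by norm_num
          _ = 2 * Cr := by ring
      · intro t ht
        set B : Set Ω := Y0 ⁻¹' t with hBdef
        have hB : MeasurableSet B := hY0 ht
        have hiBint : Integrable (B.indicator (fun _ => (1:ℝ))) μ :=
          (integrable_const (1:ℝ)).indicator hB
        have hiABint : Integrable ((A ∩ B).indicator (fun _ => (1:ℝ))) μ :=
          (integrable_const (1:ℝ)).indicator (hA.inter hB)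
        have hrb' : ∀ᵐ x ∂μ, ‖r x‖ ≤ Cr := by
          filter_upwards [hrb] with x hx; rwa [Real.norm_eq_abs]
        have hrpb' : ∀ᵐ x ∂μ, ‖r x * p1X x‖ ≤ Cr := by
          filter_upwards [hrpb] with x hx; rwa [Real.norm_eq_abs]
        have int1 : Integrable (fun x => r x * ((A ∩ B).indicator (fun _ => (1:ℝ)) x)) μ :=
          hiABint.bdd_mul (hr.mono hm).aestronglyMeasurable hrb'
        have int2 : Integrable (fun x => (r x * p1X x) * (B.indicator (fun _ => (1:ℝ)) x)) μ :=
          hiBint.bdd_mul (hrp.mono hm).aestronglyMeasurable hrpb'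
        have e1 : ∫ x, r x * ((A ∩ B).indicator (fun _ => (1:ℝ)) x) ∂μ
            = ∫ x, r x * (μ[(A ∩ B).indicator (fun _ => (1:ℝ))|m]) x ∂μ :=
          aux_pull hm μ hr hrb hiABint
        have e2 : ∫ x, (r x * p1X x) * (B.indicator (fun _ => (1:ℝ)) x) ∂μ
            = ∫ x, (r x * p1X x) * (μ[B.indicator (fun _ => (1:ℝ))|m]) x ∂μ :=
          aux_pull hm μ hrp hrpb hiBint
        have e3 : μ[(A ∩ B).indicator (fun _ => (1:ℝ))|m]
            =ᵐ[μ] fun x => (μ[B.indicator (fun _ => (1:ℝ))|m]) x * p1X x := by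
          have h4 := hprod t {1} ht (measurableSet_singleton 1)
          have hDA : D ⁻¹' {1} = A := by
            ext ω; simp [hAdef]
          rw [hDA, ← hBdef] at h4
          have hBA : A ∩ B = B ∩ A := Set.inter_comm _ _
          rw [hBA]
          refine h4.trans ?_
          filter_upwards with x
          rw [hp1A]
        calc ∫ x, (r x * (A.indicator (fun _ => (1:ℝ)) x - p1X x))
                * B.indicator (fun _ => (1:ℝ)) x ∂μ
            = ∫ x, (r x * ((A ∩ B).indicator (fun _ => (1:ℝ)) x)
                - (r x * p1X x) * (B.indicator (fun _ => (1:ℝ)) x)) ∂μ := by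
              refine integral_congr_ae (Filter.Eventually.of_forall fun x => ?_)
              have : (A ∩ B).indicator (fun _ => (1:ℝ)) x
                  = A.indicator (fun _ => (1:ℝ)) x * B.indicator (fun _ => (1:ℝ)) x := by
                by_cases h1 : x ∈ A <;> by_cases h2 : x ∈ B <;>
                  simp [Set.indicator_apply, h1, h2, Set.mem_inter_iff]
              simp only [this]; ring
          _ = ∫ x, r x * ((A ∩ B).indicator (fun _ => (1:ℝ)) x) ∂μ
              - ∫ x, (r x * p1X x) * (B.indicator (fun _ => (1:ℝ)) x) ∂μ :=
              integral_sub int1 int2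
          _ = 0 := by
              rw [e1, e2, sub_eq_zero]
              rw [integral_congr_ae (e3.mono fun x hx => by
                show r x * _ = _
                rw [hx])]
              refine integral_congr_ae (Filter.Eventually.of_forall fun x => ?_)
              ring
    -- from hz conclude
    have hrb' : ∀ᵐ x ∂μ, ‖r x‖ ≤ Cr := by
      filter_upwards [hrb] with x hx; rwa [Real.norm_eq_abs]
    have hrpb' : ∀ᵐ x ∂μ, ‖r x * p1X x‖ ≤ Cr := by
      filter_upwards [hrpb] with x hx; rwa [Real.norm_eq_abs]
    have hrY0i1 : Integrable (fun x => (r x * A.indicator (fun _ => (1:ℝ)) x) * Y0 x) μ := by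
      refine hY0int.bdd_mul (c := Cr)
        (hrmeas.mul (measurable_const.indicator hA)).aestronglyMeasurable ?_
      filter_upwards [hrb] with x hx
      rw [Real.norm_eq_abs, abs_mul]
      have hia : |A.indicator (fun _ => (1:ℝ)) x| ≤ 1 := by
        by_cases h1 : x ∈ A <;> simp [Set.indicator_apply, h1]
      calc |r x| * |A.indicator (fun _ => (1:ℝ)) x| ≤ Cr * 1 :=
            mul_le_mul hx hia (abs_nonneg _) hCr
        _ = Cr := mul_one _
    have hrY0i2 : Integrable (fun x => (r x * p1X x) * Y0 x) μ :=
      hY0int.bdd_mul (hrmeas.mul hp1meas).aestronglyMeasurable hrpb'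
    have hz2 : ∫ x, (r x * A.indicator (fun _ => (1:ℝ)) x) * Y0 x ∂μ
        = ∫ x, (r x * p1X x) * Y0 x ∂μ := by
      rw [← sub_eq_zero, ← integral_sub hrY0i1 hrY0i2, ← hz]
      refine integral_congr_ae (Filter.Eventually.of_forall fun x => ?_)
      ring
    calc ∫ x, r x * (A.indicator (fun _ => (1:ℝ)) x * Y0 x) ∂μ
        = ∫ x, (r x * A.indicator (fun _ => (1:ℝ)) x) * Y0 x ∂μ := by
          refine integral_congr_ae (Filter.Eventually.of_forall fun x => ?_); ring
      _ = ∫ x, (r x * p1X x) * Y0 x ∂μ := hz2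
      _ = ∫ x, (r x * p1X x) * (μ[Y0|m]) x ∂μ := aux_pull hm μ hrp hrpb hY0int
      _ = ∫ x, r x * (p1X x * (μ[Y0|m]) x) ∂μ := by
          refine integral_congr_ae (Filter.Eventually.of_forall fun x => ?_); ring
  -- assembly
  have hC2nn : 0 ≤ C2 := by
    obtain ⟨ω₀, h₀⟩ := hoverlap.exists
    rw [hC2]; exact div_nonneg (by linarith [h₀.1.trans h₀.2]) hε.le
  have hp1int : Integrable p1X μ := by rw [hp1X]; exact integrable_condExp
  have hr2b' : ∀ᵐ x ∂μ, ‖r2 x‖ ≤ C2 := by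
    filter_upwards [hr2b] with x hx; rwa [Real.norm_eq_abs]
  have Ir2 : Integrable r2 μ :=
    (integrable_const C2).mono' (hr2m.mono hm).aestronglyMeasurable hr2b'
  have Ir2Y0 : Integrable (fun x => r2 x * Y0 x) μ :=
    hY0int.bdd_mul (hr2m.mono hm).aestronglyMeasurable hr2b'
  have hr2p1m : Measurable (fun x => r2 x * p1X x) :=
    ((hr2m.mono hm).measurable).mul hp1meas
  have hr2p1b : ∀ᵐ x ∂μ, ‖r2 x * p1X x‖ ≤ C2 := by
    filter_upwards [hr2b, hbd1] with x h1 h2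
    rw [Real.norm_eq_abs, abs_mul]
    calc |r2 x| * |p1X x| ≤ C2 * 1 := mul_le_mul h1 h2 (abs_nonneg _) hC2nn
      _ = C2 := mul_one _
  have Ir2p1 : Integrable (fun x => r2 x * p1X x) μ :=
    (integrable_const C2).mono' hr2p1m.aestronglyMeasurable hr2p1b
  have hc1 : ∫ x, p1X x ∂μ = (μ A).toReal := by
    rw [hp1X, integral_condExp hm, hDind]
    exact integral_indicator_one (μ := μ) hA
  have hc1pos : 0 < (μ A).toReal := ENNReal.toReal_pos hDpos.ne' (measure_ne_top μ A)
  have hc1le : (μ A).toReal ≤ 1 - ε := by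
    rw [← hc1]
    have h7 := integral_mono_ae hp1int (integrable_const (1 - ε))
      (hoverlap.mono fun ω h => h.2)
    simpa [measure_univ] using h7
  have hc0 : (μ Aᶜ).toReal = 1 - (μ A).toReal := by
    rw [prob_compl_eq_one_sub hA,
      ENNReal.toReal_sub_of_le prob_le_one ENNReal.one_ne_top, ENNReal.toReal_one]
  have hc0pos : 0 < (μ Aᶜ).toReal := by rw [hc0]; linarith
  have hindA : ∀ (g : Ω → ℝ),
      ∫ x in A, g x ∂μ = ∫ x, g x * A.indicator (fun _ => (1:ℝ)) x ∂μ := by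
    intro g
    rw [← integral_indicator hA]
    refine integral_congr_ae (Filter.Eventually.of_forall fun x => ?_)
    by_cases hx : x ∈ A <;> simp [Set.indicator_apply, hx]
  have EdA : ∫ x in A, r2 x ∂μ = ∫ x, r2 x * p1X x ∂μ := by
    rw [hindA r2, aux_pull hm μ hr2m hr2b ((integrable_const (1:ℝ)).indicator hA), ← hp1A]
  have Ed : ∫ x in Aᶜ, r2 x ∂μ = (μ A).toReal := by
    have h5 : ∫ x in A, r2 x ∂μ + ∫ x in Aᶜ, r2 x ∂μ = ∫ x, r2 x ∂μ :=
      integral_add_compl hA Ir2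
    have e : ∫ x, r2 x ∂μ - ∫ x, r2 x * p1X x ∂μ = ∫ x, p1X x ∂μ := by
      rw [← integral_sub Ir2 Ir2p1]
      refine integral_congr_ae ?_
      filter_upwards [hoverlap] with x hx
      have h2 : (1 : ℝ) - p1X x ≠ 0 := by
        have : ε ≤ 1 - p1X x := by linarith [hx.2]
        linarith [hε]
      show p1X x / (1 - p1X x) - p1X x / (1 - p1X x) * p1X x = p1X x
      field_simp
    linarith [h5, EdA, e, hc1]
  have Iq : Integrable (μ[Y0|m]) μ := integrable_condExp
  have EnA : ∫ x in A, r2 x * Y0 x ∂μ = ∫ x, r2 x * (p1X x * (μ[Y0|m]) x) ∂μ := by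
    calc ∫ x in A, r2 x * Y0 x ∂μ
        = ∫ x, (r2 x * Y0 x) * A.indicator (fun _ => (1:ℝ)) x ∂μ := hindA _
      _ = ∫ x, r2 x * (A.indicator (fun _ => (1:ℝ)) x * Y0 x) ∂μ := by
          refine integral_congr_ae (Filter.Eventually.of_forall fun x => ?_); ring
      _ = ∫ x, r2 x * (p1X x * (μ[Y0|m]) x) ∂μ := key r2 C2 hr2m hr2b
  have EA0 : ∫ x in A, Y0 x ∂μ = ∫ x, p1X x * (μ[Y0|m]) x ∂μ := by
    calc ∫ x in A, Y0 x ∂μ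
        = ∫ x, Y0 x * A.indicator (fun _ => (1:ℝ)) x ∂μ := hindA _
      _ = ∫ x, (1:ℝ) * (A.indicator (fun _ => (1:ℝ)) x * Y0 x) ∂μ := by
          refine integral_congr_ae (Filter.Eventually.of_forall fun x => ?_); ring
      _ = ∫ x, (1:ℝ) * (p1X x * (μ[Y0|m]) x) ∂μ :=
          key (fun _ => (1:ℝ)) 1 stronglyMeasurable_const
            (Filter.Eventually.of_forall fun x => by norm_num)
      _ = ∫ x, p1X x * (μ[Y0|m]) x ∂μ := by
          refine integral_congr_ae (Filter.Eventually.of_forall fun x => ?_); ring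
  have Ir2p1q : Integrable (fun x => r2 x * (p1X x * (μ[Y0|m]) x)) μ := by
    have h6 : Integrable (fun x => (r2 x * p1X x) * (μ[Y0|m]) x) μ :=
      Iq.bdd_mul hr2p1m.aestronglyMeasurable hr2p1b
    exact h6.congr (Filter.Eventually.of_forall fun x => by ring)
  have Ir2q : Integrable (fun x => r2 x * (μ[Y0|m]) x) μ :=
    Iq.bdd_mul (hr2m.mono hm).aestronglyMeasurable hr2b'
  have En : ∫ x in Aᶜ, r2 x * Y0 x ∂μ = ∫ x in A, Y0 x ∂μ := by
    have h5 : ∫ x in A, r2 x * Y0 x ∂μ + ∫ x in Aᶜ, r2 x * Y0 x ∂μ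
        = ∫ x, r2 x * Y0 x ∂μ := integral_add_compl hA Ir2Y0
    have e6 : ∫ x, r2 x * Y0 x ∂μ = ∫ x, r2 x * (μ[Y0|m]) x ∂μ :=
      aux_pull hm μ hr2m hr2b hY0int
    have e7 : ∫ x, r2 x * (μ[Y0|m]) x ∂μ - ∫ x, r2 x * (p1X x * (μ[Y0|m]) x) ∂μ
        = ∫ x, p1X x * (μ[Y0|m]) x ∂μ := by
      rw [← integral_sub Ir2q Ir2p1q]
      refine integral_congr_ae ?_
      filter_upwards [hoverlap] with x hx
      have h2 : (1 : ℝ) - p1X x ≠ 0 := by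
        have : ε ≤ 1 - p1X x := by linarith [hx.2]
        linarith [hε]
      show p1X x / (1 - p1X x) * (μ[Y0|m]) x - p1X x / (1 - p1X x) * (p1X x * (μ[Y0|m]) x)
          = p1X x * (μ[Y0|m]) x
      field_simp
    linarith [h5, EnA, e6, e7, EA0]
  have hcond : ∀ (s : Set Ω) (g : Ω → ℝ),
      ∫ ω, g ω ∂μ[|s] = (μ s).toReal⁻¹ * ∫ ω in s, g ω ∂μ := by
    intro s g
    rw [show μ[|s] = (μ s)⁻¹ • μ.restrict s from rfl, integral_smul_measure,
      ENNReal.toReal_inv, smul_eq_mul]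
  have EY : ∫ ω in A, Y ω ∂μ = ∫ ω in A, Y1 ω ∂μ := by
    refine setIntegral_congr_fun hA fun ω hω => ?_
    have h1 : D ω = 1 := hω
    rw [hY, h1]; ring
  have E10 : ∫ ω in A, (Y1 ω - Y0 ω) ∂μ = ∫ ω in A, Y1 ω ∂μ - ∫ ω in A, Y0 ω ∂μ :=
    integral_sub hY1int.restrict hY0int.restrict
  have ENum : ∫ ω in Aᶜ, p1X ω * Y ω / (1 - p1X ω) ∂μ = ∫ ω in Aᶜ, r2 ω * Y0 ω ∂μ := by
    refine setIntegral_congr_fun hA.compl fun ω hω => ?_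
    have h0 : D ω = 0 := by
      rcases hD01 ω with h | h
      · exact h
      · exact absurd h hω
    show p1X ω * Y ω / (1 - p1X ω) = p1X ω / (1 - p1X ω) * Y0 ω
    rw [hY, h0]
    ring
  rw [hAc, hcond, hcond, hcond, hcond, EY, E10, ENum, En, Ed]
  have ha : (μ A).toReal ≠ 0 := hc1pos.ne'
  have hb : (μ Aᶜ).toReal ≠ 0 := hc0pos.ne'
  field_simp

/-- Identification of the average treatment effect on the treated by
inverse-propensity reweighting of the control group, under unconfoundedness and
overlap:
`E[Y₁−Y₀|D=1] = E[Y|D=1] − E[p₁(X)Y/p₀(X)|D=0] / E[p₁(X)/p₀(X)|D=0]`. -/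
theorem stmt_4 {Ω E : Type*} [mΩ : MeasurableSpace Ω] [StandardBorelSpace Ω] [Nonempty Ω]
    [MeasurableSpace E]
    (μ : Measure Ω) [IsProbabilityMeasure μ]
    (Y0 Y1 D : Ω → ℝ) (X : Ω → E)
    (hY0 : Measurable Y0) (hY1 : Measurable Y1) (hD : Measurable D) (hX : Measurable X)
    (hD01 : ∀ ω, D ω = 0 ∨ D ω = 1)
    (hY0int : Integrable Y0 μ) (hY1int : Integrable Y1 μ)
    -- unconfoundedness: (Y₀, Y₁) ⫫ D | X
    (hunconf : CondIndepFun (MeasurableSpace.comap X inferInstance) hX.comap_le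
      (fun ω => (Y0 ω, Y1 ω)) D μ)
    -- propensity score p₁(X) = P(D = 1 | X)
    (p1X : Ω → ℝ)
    (hp1X : p1X = μ[D | MeasurableSpace.comap X inferInstance])
    -- overlap
    (ε : ℝ) (hε : 0 < ε)
    (hoverlap : ∀ᵐ ω ∂μ, ε ≤ p1X ω ∧ p1X ω ≤ 1 - ε)
    -- P(D = 1) > 0
    (hDpos : 0 < μ {ω | D ω = 1})
    -- observed outcome Y = DY₁ + (1−D)Y₀
    (Y : Ω → ℝ) (hY : ∀ ω, Y ω = D ω * Y1 ω + (1 - D ω) * Y0 ω) :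
    ∫ ω, (Y1 ω - Y0 ω) ∂μ[|{ω | D ω = 1}] =
      (∫ ω, Y ω ∂μ[|{ω | D ω = 1}]) -
        (∫ ω, p1X ω * Y ω / (1 - p1X ω) ∂μ[|{ω | D ω = 0}]) /
          (∫ ω, p1X ω / (1 - p1X ω) ∂μ[|{ω | D ω = 0}]) := by
  have hci : CondIndepFun (MeasurableSpace.comap X inferInstance) hX.comap_le Y0 D μ :=
    hunconf.comp measurable_fst measurable_id
  have hprod := (condIndepFun_iff_condExp_inter_preimage_eq_mul
    (hm' := hX.comap_le) hY0 hD).mp hci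
  exact main_aux hX.comap_le μ Y0 Y1 D hY0 hY1 hD hD01 hY0int hY1int p1X hp1X hprod
    ε hε hoverlap hDpos Y hY
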